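/- Let S, c, C₁, C₂, P₀ ∈ ℝ and let Z : ℝ → ℝ be three times differentiable with 0 < Z(r) < 1 for all r. Define v₂ = c + C₂/(1−Z), G₂ = (v₂ − c)v₂″ − (v₂′)², P = P₀ + Z − (C₁²/(6Z²))(2 Z Z″ − (Z′)² + 3), E₄ = (v₂ − c)v₂′ − Z′ + S·P′ − (1/3)(1−Z)²·G₂′ + (1−Z)·Z′·G₂, α₀ = S·C₁², α₁ = C₂² − α₀, and Φ₂ = −(1/(2Z(1−Z)²))·[2Z(1−Z)(α₁Z + α₀)Z″ + (α₁Z(1−2Z) + α₀(2−3Z))(3 − (Z′)²) + 3(1−S)Z³(1−Z)²]. Then for all r ∈ ℝ: Φ₂′(r) = 3·Z(r)·E₄(r). -/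

import Mathlib

/-- Lower-layer traveling-wave velocity v₂ = c + C₂/(1 − Z). -/
noncomputable def v2f (c C₂ : ℝ) (Z : ℝ → ℝ) : ℝ → ℝ := fun r => c + C₂ / (1 - Z r)

/-- G₂ = (v₂ − c)v₂″ − (v₂′)². -/
noncomputable def G2f (c C₂ : ℝ) (Z : ℝ → ℝ) : ℝ → ℝ := fun r =>
  (v2f c C₂ Z r - c) * deriv (deriv (v2f c C₂ Z)) r - (deriv (v2f c C₂ Z) r) ^ 2

/-- Pressure integral P = P₀ + Z − (C₁²/(6Z²))(2ZZ″ − (Z′)² + 3). -/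
noncomputable def Pf (P₀ C₁ : ℝ) (Z : ℝ → ℝ) : ℝ → ℝ := fun r =>
  P₀ + Z r - (C₁ ^ 2 / (6 * (Z r) ^ 2)) *
    (2 * Z r * deriv (deriv Z) r - (deriv Z r) ^ 2 + 3)

/-- The reduced lower-layer momentum equation
E₄ = (v₂ − c)v₂′ − Z′ + S·P′ − (1/3)(1−Z)²·G₂′ + (1−Z)·Z′·G₂. -/
noncomputable def E4f (S c C₁ C₂ P₀ : ℝ) (Z : ℝ → ℝ) : ℝ → ℝ := fun r =>
  (v2f c C₂ Z r - c) * deriv (v2f c C₂ Z) r - deriv Z r + S * deriv (Pf P₀ C₁ Z) r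
    - (1/3) * (1 - Z r) ^ 2 * deriv (G2f c C₂ Z) r
    + (1 - Z r) * deriv Z r * G2f c C₂ Z r

/-- The second first integral Φ₂. -/
noncomputable def Phi2f (S α₀ α₁ : ℝ) (Z : ℝ → ℝ) : ℝ → ℝ := fun r =>
  -(1 / (2 * Z r * (1 - Z r) ^ 2)) *
    (2 * Z r * (1 - Z r) * (α₁ * Z r + α₀) * deriv (deriv Z) r
      + (α₁ * Z r * (1 - 2 * Z r) + α₀ * (2 - 3 * Z r)) * (3 - (deriv Z r) ^ 2)
      + 3 * (1 - S) * (Z r) ^ 3 * (1 - Z r) ^ 2)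

set_option maxHeartbeats 1600000 in
theorem stmt7 (S c C₁ C₂ P₀ : ℝ) (Z : ℝ → ℝ)
    (hZ : Differentiable ℝ Z) (hZ' : Differentiable ℝ (deriv Z))
    (hZ'' : Differentiable ℝ (deriv (deriv Z)))
    (hrange : ∀ r : ℝ, 0 < Z r ∧ Z r < 1) :
    ∀ r : ℝ, deriv (Phi2f S (S * C₁ ^ 2) (C₂ ^ 2 - S * C₁ ^ 2) Z) r
      = 3 * Z r * E4f S c C₁ C₂ P₀ Z r := by
  have hne : ∀ s : ℝ, (1 : ℝ) - Z s ≠ 0 := fun s => by have := (hrange s).2; linarith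
  have hZne : ∀ s : ℝ, Z s ≠ 0 := fun s => ne_of_gt (hrange s).1
  have h1z : ∀ s : ℝ, HasDerivAt (fun t => 1 - Z t) (-deriv Z s) s := by
    intro s
    exact ((hasDerivAt_const s (1:ℝ)).sub (hZ s).hasDerivAt).congr_deriv (by ring)
  -- first derivative of v₂
  have hv2 : ∀ s : ℝ, HasDerivAt (v2f c C₂ Z) (C₂ * deriv Z s / (1 - Z s) ^ 2) s := by
    intro s
    have h := (hasDerivAt_const s C₂).div (h1z s) (hne s)
    have h2 := (hasDerivAt_const s c).add h
    have : HasDerivAt (v2f c C₂ Z)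
        (0 + (0 * (1 - Z s) - C₂ * -deriv Z s) / (1 - Z s) ^ 2) s := h2
    convert this using 1
    ring
  have hdv2 : deriv (v2f c C₂ Z) = fun s => C₂ * deriv Z s / (1 - Z s) ^ 2 :=
    funext fun s => (hv2 s).deriv
  -- second derivative of v₂
  have hv2d : ∀ s : ℝ, HasDerivAt (fun t => C₂ * deriv Z t / (1 - Z t) ^ 2)
      (C₂ * (deriv (deriv Z) s * (1 - Z s) + 2 * (deriv Z s) ^ 2) / (1 - Z s) ^ 3) s := by
    intro s
    have h := ((hZ' s).hasDerivAt.const_mul C₂).div ((h1z s).pow 2)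
      (pow_ne_zero 2 (hne s))
    refine h.congr_deriv ?_
    have h1 := hne s
    simp only [Pi.pow_apply, Nat.cast_ofNat]
    field_simp
    ring
  have hddv2 : ∀ s : ℝ, deriv (deriv (v2f c C₂ Z)) s
      = C₂ * (deriv (deriv Z) s * (1 - Z s) + 2 * (deriv Z s) ^ 2) / (1 - Z s) ^ 3 := by
    intro s
    rw [hdv2]
    exact (hv2d s).deriv
  -- closed form for G₂
  have hG2 : G2f c C₂ Z = fun s =>
      C₂ ^ 2 * (deriv (deriv Z) s * (1 - Z s) + (deriv Z s) ^ 2) / (1 - Z s) ^ 4 := by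
    funext s
    have h1 := hne s
    simp only [G2f, v2f, (hv2 s).deriv, hddv2 s]
    field_simp
    ring
  -- derivative of G₂
  have hG2d : ∀ s : ℝ, HasDerivAt (G2f c C₂ Z)
      (C₂ ^ 2 * ((deriv (deriv (deriv Z)) s * (1 - Z s) + deriv Z s * deriv (deriv Z) s)
          * (1 - Z s)
        + 4 * deriv Z s * (deriv (deriv Z) s * (1 - Z s) + (deriv Z s) ^ 2))
        / (1 - Z s) ^ 5) s := by
    intro s
    rw [hG2]
    have hnum : HasDerivAt
        (fun t => C₂ ^ 2 * (deriv (deriv Z) t * (1 - Z t) + (deriv Z t) ^ 2))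
        (C₂ ^ 2 * ((deriv (deriv (deriv Z)) s * (1 - Z s)
            + deriv (deriv Z) s * -deriv Z s)
          + 2 * (deriv Z s) ^ 1 * deriv (deriv Z) s)) s :=
      (((hZ'' s).hasDerivAt.mul (h1z s)).add (((hZ' s).hasDerivAt).pow 2)).const_mul (C₂ ^ 2)
    have h := hnum.div ((h1z s).pow 4) (pow_ne_zero 4 (hne s))
    refine h.congr_deriv ?_
    have h1 := hne s
    simp only [Pi.pow_apply, Nat.cast_ofNat]
    field_simp
    ring
  -- derivative of P
  have hPd : ∀ s : ℝ, HasDerivAt (Pf P₀ C₁ Z)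
      (deriv Z s - C₁ ^ 2 / 3 * ((Z s) ^ 2 * deriv (deriv (deriv Z)) s
        - deriv Z s * (2 * Z s * deriv (deriv Z) s - (deriv Z s) ^ 2 + 3)) / (Z s) ^ 3) s := by
    intro s
    have hdenne : (6 : ℝ) * Z s ^ 2 ≠ 0 := by have := hZne s; positivity
    have hq := (hasDerivAt_const s (C₁ ^ 2)).div
      (((hZ s).hasDerivAt.pow 2).const_mul (6:ℝ)) hdenne
    have hin := ((((hZ s).hasDerivAt.const_mul 2).mul (hZ'' s).hasDerivAt).sub
      (((hZ' s).hasDerivAt).pow 2)).add_const (3:ℝ)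
    have h := ((hasDerivAt_const s P₀).add (hZ s).hasDerivAt).sub (hq.mul hin)
    have h' : HasDerivAt (Pf P₀ C₁ Z) _ s := h
    convert h' using 1
    have h1 := hZne s
    norm_num
    field_simp
    ring
  -- derivative of Φ₂
  intro r
  set α₀ := S * C₁ ^ 2 with hα₀
  set α₁ := C₂ ^ 2 - S * C₁ ^ 2 with hα₁
  have hz := (hZ r).hasDerivAt
  have hp := (hZ' r).hasDerivAt
  have hq := (hZ'' r).hasDerivAt
  have hDen := (hz.const_mul (2:ℝ)).mul ((h1z r).pow 2)
  have hDenne : (2 * Z r * (1 - Z r) ^ 2) ≠ 0 := by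
    have := hZne r; have := hne r; positivity
  have hNum :=
    (((((hz.const_mul (2:ℝ)).mul (h1z r)).mul ((hz.const_mul α₁).add_const α₀)).mul hq).add
      ((((hz.const_mul α₁).mul ((hasDerivAt_const r (1:ℝ)).sub (hz.const_mul (2:ℝ)))).add
          (((hasDerivAt_const r (2:ℝ)).sub (hz.const_mul (3:ℝ))).const_mul α₀)).mul
        ((hasDerivAt_const r (3:ℝ)).sub (hp.pow 2)))).add
      (((hz.pow 3).const_mul (3 * (1 - S))).mul ((h1z r).pow 2))
  have hPhi : HasDerivAt (Phi2f S α₀ α₁ Z) _ r :=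
    (((hasDerivAt_const r (1:ℝ)).div hDen hDenne).neg).mul hNum
  rw [hPhi.deriv]
  -- now expand the right-hand side
  have e1 : v2f c C₂ Z r - c = C₂ / (1 - Z r) := by simp [v2f]
  have e2 := (hv2 r).deriv
  have e3 := (hPd r).deriv
  have e4 := (hG2d r).deriv
  have e5 : G2f c C₂ Z r
      = C₂ ^ 2 * (deriv (deriv Z) r * (1 - Z r) + (deriv Z r) ^ 2) / (1 - Z r) ^ 4 := by
    rw [hG2]
  simp only [E4f, e1, e2, e3, e4, e5, hα₀, hα₁]
  have h1 := hne r
  have h2 := hZne r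
  simp only [Pi.mul_apply, Pi.pow_apply, Pi.div_apply, Pi.sub_apply, Pi.add_apply, Pi.neg_apply]
  push_cast
  field_simp
  ring
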